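/- Let f: ℝ^d → ℝ be BVG_avg at radius r > 0 with constant L_r and BVG_max at radius 2r with constant L̂_{2r}. Then for all x ∈ ℝ^d, E_{u∼Unif(B)}[‖γ_f(x + r u) − ∇f_r(x)‖₂²] ≤ L_r · L̂_{2r}, where B is the unit Euclidean ball. -/

import Mathlib

open MeasureTheory Metric Real Set
open scoped RealInnerProductSpace ENNReal NNReal

noncomputable section

abbrev Eu (d : ℕ) := EuclideanSpace ℝ (Fin d)

/-- The uniform probability measure on a set `s` (normalized restriction of Lebesgue measure). -/
def unifOn {d : ℕ} (s : Set (Eu d)) : Measure (Eu d) :=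
  (volume s)⁻¹ • volume.restrict s

/-- The locally smoothed function `f_r`: the average of `f` over a Euclidean ball of radius `r`. -/
def smoothed {d : ℕ} (f : Eu d → ℝ) (r : ℝ) (x : Eu d) : ℝ :=
  ⨍ u in Metric.closedBall (0 : Eu d) r, f (x + u)

/-- The uniform probability measure on the unit Euclidean sphere. -/
def unifSphere (d : ℕ) : Measure (Metric.sphere (0 : Eu d) 1) :=
  ((volume : Measure (Eu d)).toSphere Set.univ)⁻¹ • (volume : Measure (Eu d)).toSphere

/-- `γ` is a measurable selection of the subdifferential of the locally Lipschitz function `f`: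
it is measurable and agrees with the gradient at every point of differentiability. -/
def IsGradSelection {d : ℕ} (f : Eu d → ℝ) (γ : Eu d → Eu d) : Prop :=
  Measurable γ ∧ ∀ x, DifferentiableAt ℝ f x → γ x = gradient f x

/-- Bounded maximum local variation of the subgradient (BVG_max) at radius `r` with constant `L`. -/
def BVGmax {d : ℕ} (γ : Eu d → Eu d) (r L : ℝ) : Prop :=
  ∀ x : Eu d, ∀ u ∈ Metric.closedBall (0 : Eu d) 1, ‖γ (x + r • u) - γ x‖ ≤ L

/-- Bounded mean local oscillation of the subgradient (BVG_avg) at radius `r` with constant `L`. -/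
def BVGavg {d : ℕ} (f : Eu d → ℝ) (γ : Eu d → Eu d) (r L : ℝ) : Prop :=
  ∀ ρ : ℝ, 0 < ρ → ρ ≤ r → ∀ x : Eu d,
    ∫ u : Metric.sphere (0 : Eu d) 1,
      ‖γ (x + ρ • (u : Eu d)) - gradient (smoothed f r) x‖ ∂(unifSphere d) ≤ L

/-- The Goldstein `δ`-subdifferential of `f` at `x`. -/
def goldstein {d : ℕ} (f : Eu d → ℝ) (δ : ℝ) (x : Eu d) : Set (Eu d) :=
  convexHull ℝ {g | ∃ y ∈ Metric.closedBall x δ, DifferentiableAt ℝ f y ∧ gradient f y = g}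

/-- The mean width of a set `K ⊆ ℝ^d`. -/
def meanWidth {d : ℕ} (K : Set (Eu d)) : ℝ :=
  ∫ u : Metric.sphere (0 : Eu d) 1,
    sSup ((fun p : Eu d × Eu d => ⟪(u : Eu d), p.1 - p.2⟫) '' (K ×ˢ K)) ∂(unifSphere d)

/-- `proj` is the Euclidean projection onto the set `X`. -/
def IsProjOn {d : ℕ} (X : Set (Eu d)) (proj : Eu d → Eu d) : Prop :=
  ∀ z, proj z ∈ X ∧ ∀ w ∈ X, ‖z - proj z‖ ≤ ‖z - w‖

/-- The AGD+ iterate recurrences with step sizes `a` (cumulative sums `A`),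
gradient estimates `g` and projection `proj` onto the feasible set. -/
def AGDPlus {d : ℕ} (proj : Eu d → Eu d) (a A : ℕ → ℝ) (g x y z : ℕ → Eu d) : Prop :=
  (∀ k, A k = ∑ i ∈ Finset.range (k + 1), a i) ∧
  z 0 = x 0 - a 0 • g 0 ∧ y 0 = proj (z 0) ∧
  (∀ k, x (k + 1) = (A k / A (k + 1)) • y k + (a (k + 1) / A (k + 1)) • proj (z k)) ∧
  (∀ k, z (k + 1) = z k - a (k + 1) • g (k + 1)) ∧
  (∀ k, y (k + 1) = (A k / A (k + 1)) • y k + (a (k + 1) / A (k + 1)) • proj (z (k + 1)))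

/-- The bias error term `E_k^b`. -/
def Ebias {d : ℕ} (γ : Eu d → Eu d) (a : ℕ → ℝ) (g x : ℕ → Eu d) (w : Eu d) (k : ℕ) : ℝ :=
  a k * ⟪g k - γ (x k), w - x k⟫

/-- The variance error term `E_k^v`. -/
def Evar {d : ℕ} (γ : Eu d → Eu d) (a : ℕ → ℝ) (g x v : ℕ → Eu d) (k : ℕ) : ℝ :=
  a k * ⟪γ (x k) - g k, v k - x k⟫

/-- The smoothness error term `E_k^s`. -/
def Esmooth {d : ℕ} (f : Eu d → ℝ) (γ : Eu d → Eu d) (a A : ℕ → ℝ) (x y : ℕ → Eu d) (k : ℕ) : ℝ :=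
  A k * (f (y k) - f (x k) - ⟪γ (x k), y k - x k⟫ - (A k / (2 * (a k) ^ 2)) * ‖y k - x k‖ ^ 2)

/-- The gap estimate `G_k`. -/
def gapG {d : ℕ} (f : Eu d → ℝ) (γ : Eu d → Eu d) (a A : ℕ → ℝ) (g x y v : ℕ → Eu d)
    (w : Eu d) (k : ℕ) : ℝ :=
  f (y k) - (A k)⁻¹ * (∑ i ∈ Finset.range (k + 1), a i * (f (x i) + ⟪g i, v k - x i⟫))
    + (A k)⁻¹ * (∑ i ∈ Finset.range (k + 1), Ebias γ a g x w i)
    - (1 / (2 * A k)) * ‖v k - x 0‖ ^ 2 + (1 / (2 * A k)) * ‖w - x 0‖ ^ 2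


lemma loclip_compact {d : ℕ} {f : Eu d → ℝ} (hf : LocallyLipschitz f) {C : Set (Eu d)}
    (hC : IsCompact C) :
    ∃ (K : ℝ≥0) (ε : ℝ), 0 < ε ∧ ∀ y ∈ C, LipschitzOnWith K f (Metric.ball y ε) := by
  choose K t ht hlip using hf
  choose δ hδ hball using fun z => Metric.mem_nhds_iff.1 (ht z)
  obtain ⟨s, hsC, hcover⟩ := hC.elim_nhds_subcover (fun z => ball z (δ z / 2))
    (fun z _ => ball_mem_nhds z (half_pos (hδ z)))
  rcases s.eq_empty_or_nonempty with rfl | hs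
  · exact ⟨1, 1, one_pos, fun y hy => absurd (hcover hy) (by simp)⟩
  refine ⟨s.sup K, s.inf' hs (fun z => δ z / 2), ?_, ?_⟩
  · exact (Finset.lt_inf'_iff hs).2 fun z _ => half_pos (hδ z)
  · intro y hy
    obtain ⟨z, hzs, hyz⟩ : ∃ z ∈ s, y ∈ ball z (δ z / 2) := by
      simpa using hcover hy
    have h1 : ball y (s.inf' hs fun z => δ z / 2) ⊆ t z := by
      refine subset_trans (fun w hw => ?_) (hball z)
      have h2 : dist w y < δ z / 2 :=
        lt_of_lt_of_le hw (Finset.inf'_le _ hzs)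
      have h3 : dist y z < δ z / 2 := hyz
      exact mem_ball.2 <| (dist_triangle w y z).trans_lt (by linarith)
    intro a ha b hb
    exact (((hlip z).mono h1) ha hb).trans
      (mul_le_mul_left (ENNReal.coe_le_coe.2 (Finset.le_sup hzs)) _)

lemma ae_diff_compact {d : ℕ} {f : Eu d → ℝ} (hf : LocallyLipschitz f) {C : Set (Eu d)}
    (hC : IsCompact C) :
    ∀ᵐ z ∂(volume : Measure (Eu d)), z ∈ C → DifferentiableAt ℝ f z := by
  obtain ⟨K, ε, hε, hK⟩ := loclip_compact hf hC
  obtain ⟨s, hsC, hcover⟩ := hC.elim_nhds_subcover (fun y => ball y ε)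
    (fun y _ => ball_mem_nhds y hε)
  have H : ∀ᵐ z ∂(volume : Measure (Eu d)), ∀ y ∈ (s : Set (Eu d)), z ∈ ball y ε → DifferentiableAt ℝ f z := by
    rw [MeasureTheory.ae_ball_iff s.countable_toSet]
    intro y hy
    filter_upwards [(hK y (hsC y hy)).ae_differentiableWithinAt_of_mem
      (μ := (volume : Measure (Eu d)))] with z hz hzball
    exact (hz hzball).differentiableAt (isOpen_ball.mem_nhds hzball)
  filter_upwards [H] with z hz hzC
  obtain ⟨y, hys, hzy⟩ : ∃ y ∈ s, z ∈ ball y ε := by simpa using hcover hzC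
  exact hz y hys hzy

section grad
variable {d : ℕ} {f : Eu d → ℝ} {r : ℝ}

/-- the normalized uniform measure on the ball of radius r -/
def nuB (d : ℕ) (r : ℝ) : Measure (Eu d) :=
  (volume (Metric.closedBall (0 : Eu d) r))⁻¹ • volume.restrict (Metric.closedBall 0 r)

lemma nuB_prob (hr : 0 < r) : IsProbabilityMeasure (nuB d r) := by
  constructor
  rw [nuB, Measure.smul_apply, Measure.restrict_apply_univ, smul_eq_mul,
    ENNReal.inv_mul_cancel (measure_closedBall_pos volume 0 hr).ne' measure_closedBall_lt_top.ne]

lemma smoothed_eq (f : Eu d → ℝ) (r : ℝ) (y : Eu d) :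
    smoothed f r y = ∫ u, f (y + u) ∂(nuB d r) := by
  rw [smoothed, setAverage_eq', nuB]

set_option maxHeartbeats 1000000 in
lemma grad_smoothed (hf : LocallyLipschitz f) (hr : 0 < r) (x : Eu d) :
    Integrable (fun u => gradient f (x + u)) (nuB d r) ∧
      gradient (smoothed f r) x = ∫ u, gradient f (x + u) ∂(nuB d r) := by
  haveI := nuB_prob (d := d) hr
  obtain ⟨K, ε, hε, hK⟩ := loclip_compact hf (isCompact_closedBall x r)
  have hcont : Continuous fun u : Eu d => f (x + u) :=
    hf.continuous.comp (continuous_const.add continuous_id)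
  have hmem : ∀ᵐ u ∂(nuB d r), u ∈ Metric.closedBall (0 : Eu d) r := by
    rw [nuB]
    exact Measure.ae_smul_measure (ae_restrict_mem measurableSet_closedBall) _
  have htrans : ∀ u : Eu d, u ∈ Metric.closedBall (0 : Eu d) r →
      x + u ∈ Metric.closedBall x r := by
    intro u hu
    simpa [mem_closedBall, dist_eq_norm] using mem_closedBall_zero_iff.1 hu
  have hdiff_ae : ∀ᵐ u ∂(nuB d r), DifferentiableAt ℝ f (x + u) := by
    have h0 := ae_diff_compact hf (isCompact_closedBall x r)
    have h1 : ∀ᵐ u ∂(volume : Measure (Eu d)),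
        x + u ∈ Metric.closedBall x r → DifferentiableAt ℝ f (x + u) := by
      have hqmp : MeasureTheory.MeasurePreserving (fun u : Eu d => x + u) volume volume :=
        measurePreserving_add_left volume x
      exact hqmp.quasiMeasurePreserving.ae h0
    rw [nuB]
    refine Measure.ae_smul_measure ?_ _
    rw [ae_restrict_iff' measurableSet_closedBall]
    filter_upwards [h1] with u hu huB
    exact hu (htrans u huB)
  set F' : Eu d → (Eu d →L[ℝ] ℝ) := fun u => fderiv ℝ f (x + u) with hF'
  have key := hasFDerivAt_integral_of_dominated_loc_of_lip (𝕜 := ℝ) (μ := nuB d r)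
    (F := fun y u => f (y + u)) (F' := F') (x₀ := x) (bound := fun _ => (K : ℝ)) (ball_mem_nhds x hε)
    (Filter.Eventually.of_forall fun y =>
      (hf.continuous.comp (continuous_const.add continuous_id)).aestronglyMeasurable)
    (by
      have h2 : IntegrableOn (fun u : Eu d => f (x + u)) (Metric.closedBall 0 r) volume :=
        hcont.continuousOn.integrableOn_compact (isCompact_closedBall 0 r)
      rw [nuB]
      exact h2.smul_measure (ENNReal.inv_ne_top.2 (measure_closedBall_pos volume 0 hr).ne'))
    (((measurable_fderiv ℝ f).comp (measurable_id.const_add x)).aestronglyMeasurable)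
    (by
      filter_upwards [hmem] with u hu
      intro a ha b hb
      have hmem1 : a + u ∈ Metric.ball (x + u) ε := by
        simpa [mem_ball, dist_eq_norm, add_sub_add_right_eq_sub] using ha
      have hmem2 : b + u ∈ Metric.ball (x + u) ε := by
        simpa [mem_ball, dist_eq_norm, add_sub_add_right_eq_sub] using hb
      have h3 := (hK (x + u) (htrans u hu)) hmem1 hmem2
      have h4 : edist (a + u) (b + u) = edist a b := by
        simp [edist_dist, dist_eq_norm, add_sub_add_right_eq_sub]
      rw [h4] at h3
      refine h3.trans (mul_le_mul_left ?_ _)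
      rw [Real.nnabs_coe])
    (integrable_const _)
    (by
      filter_upwards [hdiff_ae] with u hu
      have h1 : HasFDerivAt f (fderiv ℝ f (x + u)) (x + u) := hu.hasFDerivAt
      have h2 : HasFDerivAt (fun y : Eu d => y + u) (ContinuousLinearMap.id ℝ (Eu d)) x :=
        (hasFDerivAt_id x).add_const u
      have h3 := h1.comp x h2
      rw [ContinuousLinearMap.comp_id] at h3
      exact h3)
  have hsm : smoothed f r = fun y => ∫ u, f (y + u) ∂(nuB d r) := funext (smoothed_eq f r)
  have hfd : fderiv ℝ (smoothed f r) x = ∫ u, F' u ∂(nuB d r) := by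
    rw [hsm]; exact key.2.fderiv
  set L := (InnerProductSpace.toDual ℝ (Eu d)).symm.toLinearIsometry with hL
  have hgrad : ∀ u : Eu d, gradient f (x + u) = L (F' u) := fun u => rfl
  constructor
  · have h6 := L.toContinuousLinearMap.integrable_comp key.1
    exact h6.congr (Filter.Eventually.of_forall fun u => (hgrad u).symm)
  · calc gradient (smoothed f r) x = L (∫ u, F' u ∂(nuB d r)) := by rw [gradient, hfd]; rfl
    _ = ∫ u, L (F' u) ∂(nuB d r) := (L.integral_comp_comm F').symm
    _ = ∫ u, gradient f (x + u) ∂(nuB d r) := by simp_rw [hgrad]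
end grad

lemma nuB_ae_diff {d : ℕ} {f : Eu d → ℝ} {r : ℝ} (hf : LocallyLipschitz f) (hr : 0 < r)
    (x : Eu d) : ∀ᵐ u ∂(nuB d r), DifferentiableAt ℝ f (x + u) := by
  have h0 := ae_diff_compact hf (isCompact_closedBall x r)
  have htrans : ∀ u : Eu d, u ∈ Metric.closedBall (0 : Eu d) r →
      x + u ∈ Metric.closedBall x r := by
    intro u hu
    simpa [mem_closedBall, dist_eq_norm] using mem_closedBall_zero_iff.1 hu
  have h1 : ∀ᵐ u ∂(volume : Measure (Eu d)),
      x + u ∈ Metric.closedBall x r → DifferentiableAt ℝ f (x + u) :=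
    (measurePreserving_add_left volume x).quasiMeasurePreserving.ae h0
  rw [nuB]
  refine Measure.ae_smul_measure ?_ _
  rw [ae_restrict_iff' measurableSet_closedBall]
  filter_upwards [h1] with u hu huB
  exact hu (htrans u huB)

lemma claimA {d : ℕ} {f : Eu d → ℝ} (hf : LocallyLipschitz f) {γ : Eu d → Eu d}
    (hγ : IsGradSelection f γ) {r Lmax2 : ℝ} (hr : 0 < r)
    (hmax : BVGmax γ (2 * r) Lmax2) (x : Eu d) {v : Eu d} (hv : ‖v‖ ≤ r) :
    ‖γ (x + v) - gradient (smoothed f r) x‖ ≤ Lmax2 := by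
  haveI := nuB_prob (d := d) hr
  obtain ⟨hint, hG⟩ := grad_smoothed hf hr x
  have hmem : ∀ᵐ w ∂(nuB d r), w ∈ Metric.closedBall (0 : Eu d) r := by
    rw [nuB]
    exact Measure.ae_smul_measure (ae_restrict_mem measurableSet_closedBall) _
  have key : ∀ᵐ w ∂(nuB d r), ‖γ (x + v) - gradient f (x + w)‖ ≤ Lmax2 := by
    filter_upwards [hmem, nuB_ae_diff hf hr x] with w hw hdw
    rw [← hγ.2 (x + w) hdw]
    set q := (2 * r)⁻¹ • (w - v) with hqdef
    have hq : q ∈ Metric.closedBall (0 : Eu d) 1 := by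
      rw [mem_closedBall_zero_iff, hqdef, norm_smul, norm_inv, Real.norm_eq_abs,
        abs_of_pos (by linarith), inv_mul_le_iff₀ (by linarith), mul_one]
      have h7 := mem_closedBall_zero_iff.1 hw
      calc ‖w - v‖ ≤ ‖w‖ + ‖v‖ := norm_sub_le _ _
        _ ≤ 2 * r := by linarith
    have h2 := hmax (x + v) q hq
    have h3 : (x + v) + (2 * r) • q = x + w := by
      rw [hqdef, smul_inv_smul₀ (by linarith : (2 : ℝ) * r ≠ 0)]
      abel
    rw [h3, norm_sub_rev] at h2
    exact h2
  have h5 : γ (x + v) - gradient (smoothed f r) x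
      = ∫ w, (γ (x + v) - gradient f (x + w)) ∂(nuB d r) := by
    rw [integral_sub (integrable_const _) hint, integral_const, hG]
    simp
  rw [h5]
  have h6 := norm_integral_le_of_norm_le (integrable_const Lmax2)
    (key.mono fun w hw => by simpa using hw)
  simpa using h6

set_option maxHeartbeats 1000000 in
lemma claimB {d : ℕ} (hd : 0 < d) {f : Eu d → ℝ} {γ : Eu d → Eu d} (hγm : Measurable γ)
    {r Lavg Lmax2 : ℝ} (hr : 0 < r) (havg : BVGavg f γ r Lavg) (x : Eu d)
    (hbdd : ∀ v : Eu d, ‖v‖ ≤ r → ‖γ (x + v) - gradient (smoothed f r) x‖ ≤ Lmax2) :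
    ∫⁻ u in Metric.closedBall (0 : Eu d) 1,
      ENNReal.ofReal ‖γ (x + r • u) - gradient (smoothed f r) x‖ ∂volume
      ≤ volume (Metric.ball (0 : Eu d) 1) * ENNReal.ofReal Lavg := by
  haveI : Nonempty (Fin d) := ⟨⟨0, hd⟩⟩
  haveI : Nontrivial (Eu d) := inferInstance
  set G := gradient (smoothed f r) x with hG
  set g : Eu d → ℝ≥0∞ := fun v => ENNReal.ofReal ‖γ (x + r • v) - G‖ with hgdef
  have hgm : Measurable g :=
    (((hγm.comp (measurable_const.add (measurable_id.const_smul r))).sub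
      measurable_const).norm).ennreal_ofReal
  set S := (volume : Measure (Eu d)).toSphere with hS
  set P := Measure.volumeIoiPow (Module.finrank ℝ (Eu d) - 1) with hP
  set φ := homeomorphUnitSphereProd (Eu d) with hφ
  set A : Set (({(0 : Eu d)}ᶜ : Set (Eu d)) : Type _) := (↑) ⁻¹' Metric.ball (0 : Eu d) 1
    with hA
  have hAm : MeasurableSet A := measurable_subtype_coe measurableSet_ball
  set F : Metric.sphere (0 : Eu d) 1 × Ioi (0 : ℝ) → ℝ≥0∞ :=
    fun p => A.indicator (fun y => g y.val) (φ.symm p) with hF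
  have hFm : Measurable F :=
    ((hgm.comp measurable_subtype_coe).indicator hAm).comp (Homeomorph.measurable _)
  suffices hsuff : ∫⁻ u in Metric.closedBall (0 : Eu d) 1, g u ∂volume
      ≤ volume (Metric.ball (0 : Eu d) 1) * ENNReal.ofReal Lavg by exact hsuff
  -- step 1: closedBall to ball minus 0
  have h1 : (Metric.closedBall (0 : Eu d) 1 : Set (Eu d)) =ᵐ[volume]
      (Metric.ball (0 : Eu d) 1 : Set (Eu d)) := by
    rw [MeasureTheory.ae_eq_set]
    constructor
    · rw [closedBall_diff_ball]
      exact Measure.addHaar_sphere volume 0 1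
    · rw [diff_eq_empty.2 ball_subset_closedBall]
      exact measure_empty
  have h2 : ((Metric.ball (0 : Eu d) 1 \ {0}) : Set (Eu d)) =ᵐ[volume]
      (Metric.ball (0 : Eu d) 1 : Set (Eu d)) :=
    MeasureTheory.diff_ae_eq_self.2 (measure_mono_null inter_subset_right (measure_singleton 0))
  rw [setLIntegral_congr h1, ← setLIntegral_congr h2]
  -- step 2: to subtype
  have h3 : ∫⁻ v in Metric.ball (0 : Eu d) 1 \ {0}, g v ∂volume
      = ∫⁻ y in A, g y.val ∂(volume.comap (Subtype.val : ({(0 : Eu d)}ᶜ : Set (Eu d)) → Eu d)) := by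
    rw [setLIntegral_subtype (measurableSet_singleton (0 : Eu d)).compl A (fun v => g v)]
    have himg : (Subtype.val '' A : Set (Eu d)) = Metric.ball (0 : Eu d) 1 \ {0} := by
      ext v
      simp only [hA, Set.mem_image, Set.mem_preimage, Subtype.exists, exists_and_right,
        exists_eq_right, mem_diff, mem_singleton_iff, mem_compl_iff]
      tauto
    rw [himg]
  rw [h3]
  -- step 3: measure preserving to product
  have h4 : ∫⁻ y in A, g y.val ∂(volume.comap (Subtype.val : ({(0 : Eu d)}ᶜ : Set (Eu d)) → Eu d)) = ∫⁻ p, F p ∂(S.prod P) := by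
    rw [← lintegral_indicator hAm]
    rw [← (Measure.measurePreserving_homeomorphUnitSphereProd
      (volume : Measure (Eu d))).lintegral_comp hFm]
    refine lintegral_congr fun y => ?_
    simp only [hF, hφ, Homeomorph.symm_apply_apply]
  rw [h4]
  -- step 4: Fubini
  have h5 : ∫⁻ p, F p ∂(S.prod P) = ∫⁻ ρ, ∫⁻ σ, F (σ, ρ) ∂S ∂P :=
    lintegral_prod_symm F hFm.aemeasurable
  rw [h5]
  -- constants
  have hc0 : S Set.univ ≠ 0 := by
    rw [hS, Measure.toSphere_apply_univ]
    refine mul_ne_zero ?_ (measure_ball_pos _ _ one_pos).ne'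
    simp only [ne_eq, Nat.cast_eq_zero, finrank_euclideanSpace_fin]
    omega
  have hcT : S Set.univ ≠ ∞ := measure_ne_top _ _
  -- inner bound
  have hinner : ∀ ρ : Ioi (0 : ℝ), ∫⁻ σ, F (σ, ρ) ∂S ≤
      Set.indicator (Iio (⟨1, mem_Ioi.2 one_pos⟩ : Ioi (0 : ℝ)))
        (fun _ => S Set.univ * ENNReal.ofReal Lavg) ρ := by
    intro ρ
    by_cases hρ : (ρ : ℝ) < 1
    · have hmemA : ∀ σ : Metric.sphere (0 : Eu d) 1, (φ.symm (σ, ρ)).val ∈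
          Metric.ball (0 : Eu d) 1 := by
        intro σ
        have hσ : ‖(σ : Eu d)‖ = 1 := mem_sphere_zero_iff_norm.1 σ.2
        simp only [hφ, homeomorphUnitSphereProd_symm_apply_coe]
        rw [mem_ball_zero_iff, norm_smul, hσ, mul_one, Real.norm_eq_abs,
          abs_of_pos ρ.2]
        exact hρ
      have hFval : ∀ σ : Metric.sphere (0 : Eu d) 1, F (σ, ρ) = g ((ρ : ℝ) • (σ : Eu d)) := by
        intro σ
        have hm : φ.symm (σ, ρ) ∈ A := by
          rw [hA, mem_preimage]; exact hmemA σ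
        rw [hF]
        simp only []
        rw [Set.indicator_of_mem hm]
        have hcoe : ((φ.symm (σ, ρ) : ({(0 : Eu d)}ᶜ : Set (Eu d))) : Eu d)
            = (ρ : ℝ) • (σ : Eu d) := by
          rw [hφ, homeomorphUnitSphereProd_symm_apply_coe]
        rw [hcoe]
      set ρ' := r * (ρ : ℝ) with hρ'
      have hρ'pos : 0 < ρ' := mul_pos hr ρ.2
      have hρ'le : ρ' ≤ r := by
        rw [hρ']
        nlinarith [(mem_Ioi.1 ρ.2).le]
      set Fσ : Metric.sphere (0 : Eu d) 1 → ℝ := fun σ => ‖γ (x + ρ' • (σ : Eu d)) - G‖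
        with hFσ
      have hFσbdd : ∀ σ, Fσ σ ≤ Lmax2 := by
        intro σ
        refine hbdd _ ?_
        have hσ : ‖(σ : Eu d)‖ = 1 := mem_sphere_zero_iff_norm.1 σ.2
        rw [norm_smul, hσ, mul_one, Real.norm_eq_abs, abs_of_pos hρ'pos]
        exact hρ'le
      have hFσm : Measurable Fσ :=
        ((hγm.comp (measurable_const.add (measurable_subtype_coe.const_smul ρ'))).sub
          measurable_const).norm
      have hFσint : Integrable Fσ S := by
        refine Integrable.mono' (integrable_const Lmax2) hFσm.aestronglyMeasurable ?_
        filter_upwards with σ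
        rw [Real.norm_eq_abs, abs_of_nonneg (norm_nonneg _)]
        exact hFσbdd σ
      have havg' := havg ρ' hρ'pos hρ'le x
      have hsmul : ∫ σ, Fσ σ ∂(unifSphere d) = ((S Set.univ)⁻¹).toReal • ∫ σ, Fσ σ ∂S := by
        rw [unifSphere, integral_smul_measure]
      have hSle : ∫ σ, Fσ σ ∂S ≤ (S Set.univ).toReal * Lavg := by
        have h6 : ((S Set.univ)⁻¹).toReal * ∫ σ, Fσ σ ∂S ≤ Lavg := by
          rw [← smul_eq_mul, ← hsmul]
          exact havg'
        have h7 : (0:ℝ) < (S Set.univ).toReal := ENNReal.toReal_pos hc0 hcT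
        rw [ENNReal.toReal_inv] at h6
        calc ∫ σ, Fσ σ ∂S = (S Set.univ).toReal * (((S Set.univ).toReal)⁻¹ * ∫ σ, Fσ σ ∂S) := by
              field_simp
          _ ≤ (S Set.univ).toReal * Lavg := by
              exact mul_le_mul_of_nonneg_left h6 h7.le
      have h8 : ∫⁻ σ, F (σ, ρ) ∂S = ENNReal.ofReal (∫ σ, Fσ σ ∂S) := by
        rw [MeasureTheory.ofReal_integral_eq_lintegral_ofReal hFσint
          (Filter.Eventually.of_forall fun σ => norm_nonneg _)]
        refine lintegral_congr fun σ => ?_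
        rw [hFval σ]
        show ENNReal.ofReal ‖γ (x + r • ((ρ : ℝ) • (σ : Eu d))) - G‖
          = ENNReal.ofReal ‖γ (x + ρ' • (σ : Eu d)) - G‖
        rw [smul_smul, ← hρ']
      rw [h8, Set.indicator_of_mem]
      · calc ENNReal.ofReal (∫ σ, Fσ σ ∂S) ≤ ENNReal.ofReal ((S Set.univ).toReal * Lavg) :=
              ENNReal.ofReal_le_ofReal hSle
          _ = ENNReal.ofReal ((S Set.univ).toReal) * ENNReal.ofReal Lavg := by
              rw [ENNReal.ofReal_mul ENNReal.toReal_nonneg]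
          _ = S Set.univ * ENNReal.ofReal Lavg := by rw [ENNReal.ofReal_toReal hcT]
      · exact mem_Iio.2 (Subtype.mk_lt_mk.2 hρ)
    · have hzero : ∀ σ : Metric.sphere (0 : Eu d) 1, F (σ, ρ) = 0 := by
        intro σ
        rw [hF]
        simp only []
        refine Set.indicator_of_notMem ?_ _
        intro hmem
        rw [hA, mem_preimage] at hmem
        have hσ : ‖(σ : Eu d)‖ = 1 := mem_sphere_zero_iff_norm.1 σ.2
        rw [hφ, mem_ball_zero_iff] at hmem
        rw [homeomorphUnitSphereProd_symm_apply_coe, norm_smul, hσ, mul_one,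
          Real.norm_eq_abs, abs_of_pos ρ.2] at hmem
        exact hρ hmem
      simp only [hzero]
      simp
  -- outer bound
  calc ∫⁻ ρ, ∫⁻ σ, F (σ, ρ) ∂S ∂P
      ≤ ∫⁻ ρ, Set.indicator (Iio (⟨1, mem_Ioi.2 one_pos⟩ : Ioi (0 : ℝ)))
          (fun _ => S Set.univ * ENNReal.ofReal Lavg) ρ ∂P := lintegral_mono hinner
    _ = S Set.univ * ENNReal.ofReal Lavg * P (Iio (⟨1, mem_Ioi.2 one_pos⟩ : Ioi (0 : ℝ))) := by
        rw [lintegral_indicator_const measurableSet_Iio]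
    _ ≤ volume (Metric.ball (0 : Eu d) 1) * ENNReal.ofReal Lavg := by
        have h9 : (1 : ℕ) ≤ d := hd
        have hn : ((Module.finrank ℝ (Eu d) - 1 : ℕ) : ℝ) + 1 = (d : ℝ) := by
          rw [finrank_euclideanSpace_fin, Nat.cast_sub h9]
          push_cast
          ring
        have hPIio : P (Iio (⟨1, mem_Ioi.2 one_pos⟩ : Ioi (0 : ℝ)))
            = ENNReal.ofReal (1 / (d : ℝ)) := by
          rw [hP, Measure.volumeIoiPow_apply_Iio]
          congr 1
          rw [hn]
          norm_num
        have hone : (d : ℝ≥0∞) * ENNReal.ofReal (1 / (d : ℝ)) = 1 := by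
          rw [← ENNReal.ofReal_natCast d, ← ENNReal.ofReal_mul (by positivity)]
          rw [mul_one_div, div_self (by exact_mod_cast hd.ne'), ENNReal.ofReal_one]
        rw [hPIio, hS, Measure.toSphere_apply_univ, finrank_euclideanSpace_fin]
        refine le_of_eq ?_
        calc (d : ℝ≥0∞) * volume (Metric.ball (0 : Eu d) 1) * ENNReal.ofReal Lavg *
              ENNReal.ofReal (1 / (d : ℝ))
            = volume (Metric.ball (0 : Eu d) 1) * ENNReal.ofReal Lavg *
              ((d : ℝ≥0∞) * ENNReal.ofReal (1 / (d : ℝ))) := by ring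
          _ = volume (Metric.ball (0 : Eu d) 1) * ENNReal.ofReal Lavg := by
              rw [hone, mul_one]

set_option maxHeartbeats 1000000 in
/-- variance bound `E_{u∼Unif(B)}[‖γ_f(x + r u) − ∇f_r(x)‖²] ≤ L_r L̂_{2r}`. -/
theorem statement7 (d : ℕ) (f : Eu d → ℝ) (hf : LocallyLipschitz f)
    (γ : Eu d → Eu d) (hγ : IsGradSelection f γ)
    (r Lavg Lmax2 : ℝ) (hr : 0 < r)
    (havg : BVGavg f γ r Lavg) (hmax : BVGmax γ (2 * r) Lmax2) (x : Eu d) :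
    ∫ u, ‖γ (x + r • u) - gradient (smoothed f r) x‖ ^ 2
        ∂(unifOn (Metric.closedBall (0 : Eu d) 1)) ≤ Lavg * Lmax2 := by
  have hLavg : 0 ≤ Lavg :=
    le_trans (integral_nonneg fun σ => norm_nonneg _) (havg r hr le_rfl x)
  have hLmax : 0 ≤ Lmax2 := by
    have h0 := hmax x 0 (by simp)
    simpa using h0
  rcases Nat.eq_zero_or_pos d with hd | hd
  · subst hd
    haveI : Subsingleton (Eu 0) := Unique.instSubsingleton
    have hz : ∀ u : Eu 0, ‖γ (x + r • u) - gradient (smoothed f r) x‖ ^ 2 = 0 := fun u => by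
      rw [Subsingleton.elim (γ (x + r • u) - gradient (smoothed f r) x) 0]
      simp
    calc ∫ u, ‖γ (x + r • u) - gradient (smoothed f r) x‖ ^ 2
          ∂(unifOn (Metric.closedBall (0 : Eu 0) 1))
        = ∫ u, (0 : ℝ) ∂(unifOn (Metric.closedBall (0 : Eu 0) 1)) := by simp_rw [hz]
      _ = 0 := integral_zero _ _
      _ ≤ Lavg * Lmax2 := mul_nonneg hLavg hLmax
  · set G := gradient (smoothed f r) x with hGdef
    have hbdd : ∀ v : Eu d, ‖v‖ ≤ r → ‖γ (x + v) - G‖ ≤ Lmax2 := fun v hv =>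
      claimA hf hγ hr hmax x hv
    set V := volume (Metric.closedBall (0 : Eu d) 1) with hV
    have hV0 : V ≠ 0 := (measure_closedBall_pos volume 0 one_pos).ne'
    have hVT : V ≠ ⊤ := measure_closedBall_lt_top.ne
    by_cases hInt : Integrable (fun u => ‖γ (x + r • u) - G‖ ^ 2)
      (unifOn (Metric.closedBall (0 : Eu d) 1))
    swap
    · rw [integral_undef hInt]
      exact mul_nonneg hLavg hLmax
    have hIntOn : IntegrableOn (fun u => ‖γ (x + r • u) - G‖ ^ 2)
        (Metric.closedBall (0 : Eu d) 1) volume := by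
      rw [unifOn] at hInt
      exact (integrable_smul_measure (ENNReal.inv_ne_zero.2 hVT)
        (ENNReal.inv_ne_top.2 hV0)).1 hInt
    have hmA : Measurable fun u : Eu d => ‖γ (x + r • u) - G‖ :=
      ((hγ.1.comp (measurable_const.add (measurable_id.const_smul r))).sub
        measurable_const).norm
    have claimBres := claimB hd hγ.1 hr havg x hbdd
    have step1 : ∫⁻ u in Metric.closedBall (0 : Eu d) 1,
        ENNReal.ofReal (‖γ (x + r • u) - G‖ ^ 2) ∂volume
        ≤ ENNReal.ofReal Lmax2 * (volume (Metric.ball (0 : Eu d) 1) * ENNReal.ofReal Lavg) := by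
      calc ∫⁻ u in Metric.closedBall (0 : Eu d) 1,
            ENNReal.ofReal (‖γ (x + r • u) - G‖ ^ 2) ∂volume
          ≤ ∫⁻ u in Metric.closedBall (0 : Eu d) 1,
            ENNReal.ofReal Lmax2 * ENNReal.ofReal ‖γ (x + r • u) - G‖ ∂volume := by
            refine setLIntegral_mono (measurable_const.mul hmA.ennreal_ofReal) fun u hu => ?_
            rw [← ENNReal.ofReal_mul hLmax]
            refine ENNReal.ofReal_le_ofReal ?_
            have h10 : ‖γ (x + r • u) - G‖ ≤ Lmax2 := by
              refine hbdd (r • u) ?_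
              rw [norm_smul, Real.norm_eq_abs, abs_of_pos hr]
              have h11 : ‖u‖ ≤ 1 := mem_closedBall_zero_iff.1 hu
              nlinarith
            calc ‖γ (x + r • u) - G‖ ^ 2 = ‖γ (x + r • u) - G‖ * ‖γ (x + r • u) - G‖ := sq _
              _ ≤ Lmax2 * ‖γ (x + r • u) - G‖ :=
                  mul_le_mul_of_nonneg_right h10 (norm_nonneg _)
        _ = ENNReal.ofReal Lmax2 * ∫⁻ u in Metric.closedBall (0 : Eu d) 1,
            ENNReal.ofReal ‖γ (x + r • u) - G‖ ∂volume :=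
            lintegral_const_mul _ hmA.ennreal_ofReal
        _ ≤ ENNReal.ofReal Lmax2 * (volume (Metric.ball (0 : Eu d) 1) * ENNReal.ofReal Lavg) :=
            mul_le_mul_right claimBres _
    have step2 : ENNReal.ofReal (∫ u in Metric.closedBall (0 : Eu d) 1,
        ‖γ (x + r • u) - G‖ ^ 2 ∂volume) ≤ ENNReal.ofReal (Lmax2 * Lavg) * V := by
      rw [MeasureTheory.ofReal_integral_eq_lintegral_ofReal hIntOn
        (Filter.Eventually.of_forall fun u => by positivity)]
      refine le_trans step1 ?_
      rw [ENNReal.ofReal_mul hLmax]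
      calc ENNReal.ofReal Lmax2 * (volume (Metric.ball (0 : Eu d) 1) * ENNReal.ofReal Lavg)
          = ENNReal.ofReal Lmax2 * ENNReal.ofReal Lavg * volume (Metric.ball (0 : Eu d) 1) := by
            ring
        _ ≤ ENNReal.ofReal Lmax2 * ENNReal.ofReal Lavg * V :=
            mul_le_mul_right (measure_mono ball_subset_closedBall) _
    set I := ∫ u in Metric.closedBall (0 : Eu d) 1, ‖γ (x + r • u) - G‖ ^ 2 ∂volume with hI
    have hInn : 0 ≤ I := setIntegral_nonneg measurableSet_closedBall fun u _ => by positivity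
    have hIle : I ≤ Lmax2 * Lavg * V.toReal := by
      have h12 := ENNReal.toReal_mono (by
        exact ENNReal.mul_ne_top ENNReal.ofReal_ne_top hVT) step2
      rw [ENNReal.toReal_ofReal hInn] at h12
      rw [ENNReal.toReal_mul, ENNReal.toReal_ofReal (mul_nonneg hLmax hLavg)] at h12
      exact h12
    have hVt : 0 < V.toReal := ENNReal.toReal_pos hV0 hVT
    have hfinal : ∫ u, ‖γ (x + r • u) - G‖ ^ 2
        ∂(unifOn (Metric.closedBall (0 : Eu d) 1)) = V.toReal⁻¹ * I := by
      rw [unifOn, integral_smul_measure, ENNReal.toReal_inv, smul_eq_mul]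
    rw [hfinal]
    calc V.toReal⁻¹ * I ≤ V.toReal⁻¹ * (Lmax2 * Lavg * V.toReal) := by
          exact mul_le_mul_of_nonneg_left hIle (by positivity)
      _ = Lmax2 * Lavg * (V.toReal⁻¹ * V.toReal) := by ring
      _ = Lavg * Lmax2 := by
          rw [inv_mul_cancel₀ hVt.ne', mul_one, mul_comm]


end
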